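/- Let (U, V) be a critical point of h(U, V) = ½‖UV^T − Y‖_F² with rank(UV^T) = r, and let UV^T = PΣQ^T be a reduced SVD. Define D = (U^T U)^{-1} U^T P Σ^{1/2} and G = (V^T V)^{-1} V^T Q Σ^{1/2}. Then DG^T = I, the pair Ũ = UD, Ṽ = VG satisfies Ũ Ṽ^T = UV^T and Ũ^T Ũ = Ṽ^T Ṽ, and (Ũ, Ṽ) is also a critical point of h. -/
import Mathlib

open Matrix

/-- Let `(U,V)` be a critical point of `h(U,V) = ½‖UVᵀ − Y‖_F²` with
`rank(UVᵀ) = r`, and let `UVᵀ = PΣQᵀ` be a reduced SVD (with `Σ` diagonal with positive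
entries and `P, Q` with orthonormal columns).  Define `D = (UᵀU)⁻¹UᵀPΣ^{1/2}` and
`G = (VᵀV)⁻¹VᵀQΣ^{1/2}`.  Then `DGᵀ = I`, the pair `Ũ = UD`, `Ṽ = VG` satisfies
`ŨṼᵀ = UVᵀ` and `ŨᵀŨ = ṼᵀṼ`, and `(Ũ,Ṽ)` is also a critical point of `h`. -/
theorem balanced_factorization_from_critical_point
    (n mm r : ℕ) (Y : Matrix (Fin n) (Fin mm) ℝ)
    (U : Matrix (Fin n) (Fin r) ℝ) (V : Matrix (Fin mm) (Fin r) ℝ)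
    -- full column rank, so UᵀU and VᵀV are invertible
    (hU : IsUnit (Uᵀ * U).det) (hV : IsUnit (Vᵀ * V).det)
    -- critical point equations
    (hcrit1 : (U * Vᵀ - Y) * V = 0)
    (hcrit2 : (U * Vᵀ - Y)ᵀ * U = 0)
    -- reduced SVD of UVᵀ
    (P : Matrix (Fin n) (Fin r) ℝ) (Q : Matrix (Fin mm) (Fin r) ℝ) (σ : Fin r → ℝ)
    (hP : Pᵀ * P = 1) (hQ : Qᵀ * Q = 1) (hσ : ∀ i, 0 < σ i)
    (hSVD : U * Vᵀ = P * Matrix.diagonal σ * Qᵀ)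
    (D G : Matrix (Fin r) (Fin r) ℝ)
    (hD : D = (Uᵀ * U)⁻¹ * Uᵀ * P * Matrix.diagonal (fun i => Real.sqrt (σ i)))
    (hG : G = (Vᵀ * V)⁻¹ * Vᵀ * Q * Matrix.diagonal (fun i => Real.sqrt (σ i))) :
    D * Gᵀ = 1 ∧
    (U * D) * (V * G)ᵀ = U * Vᵀ ∧
    (U * D)ᵀ * (U * D) = (V * G)ᵀ * (V * G) ∧
    ((U * D) * (V * G)ᵀ - Y) * (V * G) = 0 ∧
    ((U * D) * (V * G)ᵀ - Y)ᵀ * (U * D) = 0 := by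
  have hσ0 : ∀ i, σ i ≠ 0 := fun i => (hσ i).ne'
  set S : Matrix (Fin r) (Fin r) ℝ := Matrix.diagonal σ with hS
  set Sh : Matrix (Fin r) (Fin r) ℝ := Matrix.diagonal (fun i => Real.sqrt (σ i)) with hSh
  set Si : Matrix (Fin r) (Fin r) ℝ := Matrix.diagonal (fun i => (σ i)⁻¹) with hSi
  have hShSh : Sh * Sh = S := by
    rw [hSh, hS, Matrix.diagonal_mul_diagonal]
    rw [show (fun i => Real.sqrt (σ i) * Real.sqrt (σ i)) = σ from
      funext fun i => Real.mul_self_sqrt (hσ i).le]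
  have hST : Sᵀ = S := by rw [hS]; exact Matrix.diagonal_transpose σ
  have hShT : Shᵀ = Sh := by rw [hSh]; exact Matrix.diagonal_transpose _
  have hVVT : (Vᵀ * V)ᵀ = Vᵀ * V := by rw [Matrix.transpose_mul, Matrix.transpose_transpose]
  have hSSi : S * Si = 1 := by
    rw [hS, hSi, Matrix.diagonal_mul_diagonal]
    rw [show (fun i => σ i * (σ i)⁻¹) = fun _ => (1:ℝ) from funext fun i => mul_inv_cancel₀ (hσ0 i)]
    exact Matrix.diagonal_one
  have hUinv : (Uᵀ * U)⁻¹ * (Uᵀ * U) = 1 := Matrix.nonsing_inv_mul _ hU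
  have hVinv : (Vᵀ * V)⁻¹ * (Vᵀ * V) = 1 := Matrix.nonsing_inv_mul _ hV
  -- U Vᵀ Q = P S
  have hUVQ : U * Vᵀ * Q = P * S := by
    rw [hSVD, Matrix.mul_assoc (P * S), hQ, Matrix.mul_one]
  have hVUP : V * Uᵀ * P = Q * S := by
    have := congrArg Matrix.transpose hSVD
    simp only [Matrix.transpose_mul, Matrix.transpose_transpose] at this
    rw [← Matrix.mul_assoc, hST] at this
    rw [this, Matrix.mul_assoc (Q * S), hP, Matrix.mul_one]
  have hPeq : U * Vᵀ * Q * Si = P := by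
    rw [hUVQ, Matrix.mul_assoc, hSSi, Matrix.mul_one]
  have hQeq : V * Uᵀ * P * Si = Q := by
    rw [hVUP, Matrix.mul_assoc, hSSi, Matrix.mul_one]
  -- U D = P Sh
  have hUD : U * D = P * Sh := by
    rw [hD, ← hPeq]
    calc U * ((Uᵀ * U)⁻¹ * Uᵀ * (U * Vᵀ * Q * Si) * Sh)
        = U * ((Uᵀ * U)⁻¹ * (Uᵀ * U)) * (Vᵀ * Q * Si * Sh) := by
          simp only [Matrix.mul_assoc]
      _ = U * (Vᵀ * Q * Si * Sh) := by rw [hUinv, Matrix.mul_one]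
      _ = U * Vᵀ * Q * Si * Sh := by simp only [Matrix.mul_assoc]
  have hVG : V * G = Q * Sh := by
    rw [hG, ← hQeq]
    calc V * ((Vᵀ * V)⁻¹ * Vᵀ * (V * Uᵀ * P * Si) * Sh)
        = V * ((Vᵀ * V)⁻¹ * (Vᵀ * V)) * (Uᵀ * P * Si * Sh) := by
          simp only [Matrix.mul_assoc]
      _ = V * (Uᵀ * P * Si * Sh) := by rw [hVinv, Matrix.mul_one]
      _ = V * Uᵀ * P * Si * Sh := by simp only [Matrix.mul_assoc]
  have hUDVG : (U * D) * (V * G)ᵀ = U * Vᵀ := by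
    rw [hUD, hVG, Matrix.transpose_mul]
    rw [hShT, hSVD]
    calc P * Sh * (Sh * Qᵀ) = P * (Sh * Sh) * Qᵀ := by simp only [Matrix.mul_assoc]
      _ = P * S * Qᵀ := by rw [hShSh]
  refine ⟨?_, hUDVG, ?_, ?_, ?_⟩
  · -- D Gᵀ = 1
    have h1 : U * D * (V * G)ᵀ * (V * G) = U * Vᵀ * (V * G) := by rw [hUDVG]
    -- alternative: direct computation
    rw [hD, hG]
    simp only [Matrix.transpose_mul, Matrix.transpose_transpose,
      Matrix.transpose_nonsing_inv, hShT, hVVT]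
    calc (Uᵀ * U)⁻¹ * Uᵀ * P * Sh * (Sh * (Qᵀ * (V * (Vᵀ * V)⁻¹)))
        = (Uᵀ * U)⁻¹ * Uᵀ * (P * (Sh * Sh) * Qᵀ) * (V * (Vᵀ * V)⁻¹) := by
          simp only [Matrix.mul_assoc]
      _ = (Uᵀ * U)⁻¹ * Uᵀ * (U * Vᵀ) * (V * (Vᵀ * V)⁻¹) := by rw [hShSh, ← hSVD]
      _ = ((Uᵀ * U)⁻¹ * (Uᵀ * U)) * ((Vᵀ * V) * (Vᵀ * V)⁻¹) := by
          simp only [Matrix.mul_assoc]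
      _ = 1 := by rw [hUinv, Matrix.mul_nonsing_inv _ hV, Matrix.mul_one]
  · -- balance
    rw [hUD, hVG]
    simp only [Matrix.transpose_mul, hShT]
    calc Sh * Pᵀ * (P * Sh) = Sh * (Pᵀ * P) * Sh := by simp only [Matrix.mul_assoc]
      _ = Sh * (Qᵀ * Q) * Sh := by rw [hP, hQ]
      _ = Sh * Qᵀ * (Q * Sh) := by simp only [Matrix.mul_assoc]
  · rw [hUDVG, hVG]
    have : (U * Vᵀ - Y) * Q = 0 := by
      rw [← hQeq]
      calc (U * Vᵀ - Y) * (V * Uᵀ * P * Si)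
          = ((U * Vᵀ - Y) * V) * (Uᵀ * P * Si) := by simp only [Matrix.mul_assoc]
        _ = 0 := by rw [hcrit1, Matrix.zero_mul]
    rw [← Matrix.mul_assoc, this, Matrix.zero_mul]
  · rw [hUDVG, hUD]
    have : (U * Vᵀ - Y)ᵀ * P = 0 := by
      rw [← hPeq]
      calc (U * Vᵀ - Y)ᵀ * (U * Vᵀ * Q * Si)
          = ((U * Vᵀ - Y)ᵀ * U) * (Vᵀ * Q * Si) := by simp only [Matrix.mul_assoc]
        _ = 0 := by rw [hcrit2, Matrix.zero_mul]
    rw [← Matrix.mul_assoc, this, Matrix.zero_mul]
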